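/- There is a constant c > 0 such that for every ε with 0 < ε ≤ 1 for which m := ⌊ε^{-1}/2⌋ ≥ 2, the following holds. Let S₀ ⊆ ℝ² consist of the 2m points {(i/(m−1), 0) : i = 0, 1, …, m−1} ∪ {(i/(m−1), 1) : i = 0, 1, …, m−1} (m equally spaced points on each of two opposite sides of the unit square). Then every Euclidean (1+ε)-spanner for S₀ has weight at least c · ε^{-2}. -/

import Mathlib

set_option maxHeartbeats 1000000


/-- The point of the Euclidean plane with coordinates `(a, b)`. -/
noncomputable def pt (a b : ℝ) : EuclideanSpace ℝ (Fin 2) :=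
  (WithLp.equiv 2 (Fin 2 → ℝ)).symm ![a, b]

/-- The weight of an unordered pair of points: the distance between its endpoints. -/
noncomputable def edgeWeight (e : Sym2 (EuclideanSpace ℝ (Fin 2))) : ℝ :=
  Sym2.lift ⟨fun a b => dist a b, fun _ _ => dist_comm _ _⟩ e

/-- `G = (S, E)` is a Euclidean `(1+ε)`-spanner for `S`. -/
def IsSpanner (S : Set (EuclideanSpace ℝ (Fin 2)))
    (E : Finset (Sym2 (EuclideanSpace ℝ (Fin 2)))) (ε : ℝ) : Prop :=
  (∀ e ∈ E, ¬ e.IsDiag ∧ ∀ x ∈ e, x ∈ S) ∧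
  ∀ p ∈ S, ∀ q ∈ S, ∃ (m : ℕ) (x : Fin (m + 1) → EuclideanSpace ℝ (Fin 2)),
    x 0 = p ∧ x (Fin.last m) = q ∧ (∀ i, x i ∈ S) ∧
    (∀ i : Fin m, s(x i.castSucc, x i.succ) ∈ E) ∧
    ∑ i : Fin m, dist (x i.castSucc) (x i.succ) ≤ (1 + ε) * dist p q

/-- `m` equally spaced points on each of two opposite sides of the unit square. -/
noncomputable def twoSides (m : ℕ) : Set (EuclideanSpace ℝ (Fin 2)) :=
  {x | ∃ i : ℕ, i < m ∧
    (x = pt ((i : ℝ) / ((m : ℝ) - 1)) 0 ∨ x = pt ((i : ℝ) / ((m : ℝ) - 1)) 1)}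

namespace SpannerAux

abbrev Plane := EuclideanSpace ℝ (Fin 2)

lemma pt_apply0 (a b : ℝ) : pt a b 0 = a := rfl
lemma pt_apply1 (a b : ℝ) : pt a b 1 = b := rfl

lemma dist_pt (a b c d : ℝ) :
    dist (pt a b) (pt c d) = Real.sqrt ((a - c)^2 + (b - d)^2) := by
  rw [EuclideanSpace.dist_eq]
  congr 1
  rw [Fin.sum_univ_two]
  simp [pt_apply0, pt_apply1, Real.dist_eq, sq_abs]

lemma pt_injective {a b c d : ℝ} (h : pt a b = pt c d) : a = c ∧ b = d :=
  ⟨by rw [← pt_apply0 a b, h, pt_apply0], by rw [← pt_apply1 a b, h, pt_apply1]⟩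

lemma edgeWeight_mk (u v : Plane) : edgeWeight s(u, v) = dist u v := rfl

lemma edgeWeight_nonneg (e : Sym2 Plane) : 0 ≤ edgeWeight e :=
  Sym2.inductionOn e (fun a b => by rw [edgeWeight_mk]; exact dist_nonneg)

lemma cross_edge_eq {a b a' b' : ℝ}
    (h : s(pt a 0, pt b 1) = s(pt a' 0, pt b' 1)) : a = a' ∧ b = b' := by
  rw [Sym2.eq_iff] at h
  rcases h with ⟨h1, h2⟩ | ⟨h1, h2⟩
  · exact ⟨(pt_injective h1).1, (pt_injective h2).1⟩
  · exact absurd (pt_injective h1).2 (by norm_num)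

lemma lemA {ε u v s d : ℝ} (hε : 0 < ε) (hd : |d| ≤ 1) (hs : |s| ≤ 1)
    (hds : |d - s| ≤ |u| + |v|)
    (h : |u| + |v| + Real.sqrt (1 + s^2) ≤ (1 + ε) * Real.sqrt (1 + d^2)) :
    |u| + |v| ≤ 5 * ε := by
  set D := Real.sqrt (1 + d^2) with hD
  set S := Real.sqrt (1 + s^2) with hS
  have hd2 : d^2 ≤ 1 := by nlinarith [abs_nonneg d, sq_abs d]
  have hs2 : s^2 ≤ 1 := by nlinarith [abs_nonneg s, sq_abs s]
  have hDsq : D^2 = 1 + d^2 := Real.sq_sqrt (by positivity)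
  have hSsq : S^2 = 1 + s^2 := Real.sq_sqrt (by positivity)
  have hDnn : 0 ≤ D := Real.sqrt_nonneg _
  have hSnn : 0 ≤ S := Real.sqrt_nonneg _
  have hD1 : 1 ≤ D := by nlinarith [sq_nonneg d]
  have hS1 : 1 ≤ S := by nlinarith [sq_nonneg s]
  have h2 : Real.sqrt 2 * Real.sqrt 2 = 2 := Real.mul_self_sqrt (by norm_num)
  have h2n : (0:ℝ) ≤ Real.sqrt 2 := Real.sqrt_nonneg 2
  have h2lb : (1.4:ℝ) ≤ Real.sqrt 2 := by nlinarith
  have hDle : D ≤ Real.sqrt 2 := by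
    rw [hD]; exact Real.sqrt_le_sqrt (by nlinarith)
  have hdd : Real.sqrt 2 * |d| ≤ D := by
    have e : Real.sqrt 2 * |d| = Real.sqrt (2 * d^2) := by
      rw [Real.sqrt_mul (by norm_num), Real.sqrt_sq_eq_abs]
    rw [e, hD]
    exact Real.sqrt_le_sqrt (by nlinarith)
  have hss : Real.sqrt 2 * |s| ≤ S := by
    have e : Real.sqrt 2 * |s| = Real.sqrt (2 * s^2) := by
      rw [Real.sqrt_mul (by norm_num), Real.sqrt_sq_eq_abs]
    rw [e, hS]
    exact Real.sqrt_le_sqrt (by nlinarith)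
  have key : Real.sqrt 2 * (D - S) ≤ |d - s| := by
    rcases le_or_gt D S with hc | hc
    · have h0 : Real.sqrt 2 * (D - S) ≤ 0 := by nlinarith
      exact h0.trans (abs_nonneg _)
    · have h1 : d^2 - s^2 ≤ |d - s| * (|d| + |s|) := by
        calc d^2 - s^2 = (d - s) * (d + s) := by ring
          _ ≤ |(d - s) * (d + s)| := le_abs_self _
          _ = |d - s| * |d + s| := abs_mul _ _
          _ ≤ |d - s| * (|d| + |s|) :=
              mul_le_mul_of_nonneg_left (abs_add_le d s) (abs_nonneg _)
      have hdiff : (D - S) * (D + S) = d^2 - s^2 := by nlinarith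
      have h3 : (Real.sqrt 2 * (D - S)) * (D + S) ≤ |d - s| * (D + S) := by
        have e1 : (Real.sqrt 2 * (D - S)) * (D + S) = Real.sqrt 2 * (d^2 - s^2) := by
          rw [mul_assoc, hdiff]
        rw [e1]
        calc Real.sqrt 2 * (d^2 - s^2) ≤ Real.sqrt 2 * (|d - s| * (|d| + |s|)) :=
              mul_le_mul_of_nonneg_left h1 h2n
          _ = |d - s| * (Real.sqrt 2 * |d| + Real.sqrt 2 * |s|) := by ring
          _ ≤ |d - s| * (D + S) :=
              mul_le_mul_of_nonneg_left (by linarith) (abs_nonneg _)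
      exact le_of_mul_le_mul_right h3 (by linarith)
  have hT : |u| + |v| ≤ (D - S) + Real.sqrt 2 * ε := by
    nlinarith [mul_le_mul_of_nonneg_left hDle hε.le]
  have hTnn : (0:ℝ) ≤ |u| + |v| := by positivity
  nlinarith [mul_le_mul_of_nonneg_left hT h2n, key, hds, hTnn, h2lb, h2]

lemma path_cross {k : ℕ} (x : Fin (k+1) → Plane) (g0 : (x 0) 1 = 0)
    (gl : (x (Fin.last k)) 1 = 1)
    (hval : ∀ t, (x t) 1 = 0 ∨ (x t) 1 = 1) :
    ∃ t : Fin k, (x t.castSucc) 1 = 0 ∧ (x t.succ) 1 = 1 := by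
  classical
  set A : Finset (Fin (k+1)) := Finset.univ.filter (fun t => (x t) 1 = 1) with hA
  have hAne : A.Nonempty := ⟨Fin.last k, by simp [hA, gl]⟩
  have ht0mem : A.min' hAne ∈ A := A.min'_mem hAne
  have ht0val : (x (A.min' hAne)) 1 = 1 := by
    have := ht0mem
    simp only [hA, Finset.mem_filter] at this
    exact this.2
  have ht0ne : A.min' hAne ≠ 0 := by
    intro hh
    rw [hh, g0] at ht0val; norm_num at ht0val
  obtain ⟨t, ht⟩ := Fin.eq_succ_of_ne_zero ht0ne
  refine ⟨t, ?_, by rw [← ht]; exact ht0val⟩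
  rcases hval t.castSucc with h0 | h1
  · exact h0
  · exfalso
    have hmem : t.castSucc ∈ A := by simp [hA, h1]
    have hle := A.min'_le _ hmem
    rw [ht] at hle
    exact absurd hle (Fin.castSucc_lt_succ : t.castSucc < t.succ).not_ge

lemma path_split {k : ℕ} (x : Fin (k+1) → Plane) (t : Fin k) :
    dist (x 0) (x t.castSucc) + dist (x t.castSucc) (x t.succ)
      + dist (x t.succ) (x (Fin.last k))
    ≤ ∑ i : Fin k, dist (x i.castSucc) (x i.succ) := by
  set y : ℕ → Plane := fun n => x ⟨min n k, Nat.lt_succ_of_le (min_le_right n k)⟩ with hy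
  have hyn : ∀ (n : ℕ) (hn : n ≤ k), y n = x ⟨n, Nat.lt_succ_of_le hn⟩ := by
    intro n hn; simp only [hy]; refine congrArg x (Fin.ext ?_); simpa using hn
  have hsum : ∑ i : Fin k, dist (x i.castSucc) (x i.succ)
      = ∑ n ∈ Finset.range k, dist (y n) (y (n+1)) := by
    rw [← Fin.sum_univ_eq_sum_range (fun n => dist (y n) (y (n+1))) k]
    refine Finset.sum_congr rfl (fun i _ => ?_)
    congr 1
    · rw [hyn i i.isLt.le]; exact congrArg x (Fin.ext rfl)
    · rw [hyn (i+1) i.isLt]; exact congrArg x (Fin.ext rfl)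
  set n0 := (t : ℕ) with hn0
  have hn0k : n0 < k := t.isLt
  have hsplit : ∑ n ∈ Finset.range k, dist (y n) (y (n+1))
      = (∑ n ∈ Finset.range n0, dist (y n) (y (n+1))) + dist (y n0) (y (n0+1))
        + ∑ n ∈ Finset.Ico (n0+1) k, dist (y n) (y (n+1)) := by
    rw [Finset.range_eq_Ico,
      ← Finset.sum_Ico_consecutive (fun n => dist (y n) (y (n+1)))
        (Nat.zero_le (n0+1)) hn0k,
      ← Finset.range_eq_Ico, Finset.sum_range_succ]
  have h1 : dist (y 0) (y n0) ≤ ∑ n ∈ Finset.range n0, dist (y n) (y (n+1)) :=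
    dist_le_range_sum_dist y n0
  have h2 : dist (y (n0+1)) (y k) ≤ ∑ n ∈ Finset.Ico (n0+1) k, dist (y n) (y (n+1)) :=
    dist_le_Ico_sum_dist y hn0k
  have e0 : y 0 = x 0 := by rw [hyn 0 (Nat.zero_le k)]; exact congrArg x (Fin.ext rfl)
  have ec : y n0 = x t.castSucc := by
    rw [hyn n0 hn0k.le]; exact congrArg x (Fin.ext rfl)
  have es : y (n0+1) = x t.succ := by
    rw [hyn (n0+1) hn0k]; exact congrArg x (Fin.ext rfl)
  have el : y k = x (Fin.last k) := by rw [hyn k le_rfl]; exact congrArg x (Fin.ext rfl)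
  rw [hsum, hsplit, ← e0, ← ec, ← es, ← el]
  linarith

end SpannerAux

open SpannerAux in
/-- Every Euclidean `(1+ε)`-spanner for `m = ⌊ε⁻¹/2⌋` equally spaced points on each of
two opposite sides of the unit square has weight at least `c · ε^{-2}`. -/
theorem spanner_lower_bound_two_sides :
    ∃ c : ℝ, 0 < c ∧ ∀ ε : ℝ, 0 < ε → ε ≤ 1 → 2 ≤ ⌊ε⁻¹ / 2⌋₊ →
      ∀ E : Finset (Sym2 (EuclideanSpace ℝ (Fin 2))),
        IsSpanner (twoSides ⌊ε⁻¹ / 2⌋₊) E ε →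
        c * ε ^ (-(2 : ℝ)) ≤ ∑ e ∈ E, edgeWeight e := by
  classical
  refine ⟨1/1936, by norm_num, ?_⟩
  intro ε hε hε1 hm E hsp
  set m := ⌊ε⁻¹ / 2⌋₊ with hmdef
  set W := ∑ e ∈ E, edgeWeight e with hW
  -- numerics
  have hm_le : (m : ℝ) ≤ ε⁻¹ / 2 := Nat.floor_le (by positivity)
  have hm_gt : ε⁻¹ / 2 < (m : ℝ) + 1 := Nat.lt_floor_add_one _
  have hm2R : (2 : ℝ) ≤ (m : ℝ) := by exact_mod_cast hm
  have hεinv4 : (4 : ℝ) ≤ ε⁻¹ := by linarith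
  have hm1pos : (0 : ℝ) < (m : ℝ) - 1 := by linarith
  have hεinv : ε * ε⁻¹ = 1 := mul_inv_cancel₀ hε.ne'
  -- grid coordinates
  set X : ℕ → ℝ := fun i => (i : ℝ) / ((m : ℝ) - 1) with hX
  have hXrange : ∀ i, i < m → 0 ≤ X i ∧ X i ≤ 1 := by
    intro i hi
    constructor
    · positivity
    · rw [hX, div_le_one hm1pos]
      have : (i : ℝ) ≤ (m : ℝ) - 1 := by
        have : (i : ℝ) + 1 ≤ (m : ℝ) := by exact_mod_cast Nat.succ_le_of_lt hi
        linarith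
      exact this
  -- membership and decomposition
  have hmemB : ∀ i, i < m → pt (X i) 0 ∈ twoSides m := fun i hi => ⟨i, hi, Or.inl rfl⟩
  have hmemT : ∀ i, i < m → pt (X i) 1 ∈ twoSides m := fun i hi => ⟨i, hi, Or.inr rfl⟩
  have hdec : ∀ z ∈ twoSides m, ∃ i, i < m ∧ (z = pt (X i) 0 ∨ z = pt (X i) 1) := by
    intro z hz; exact hz
  -- existence of a good crossing edge for each pair
  have hexists : ∀ i j : ℕ, i < m → j < m → ∃ e : Sym2 Plane, e ∈ E ∧
      ∃ a b : ℝ, e = s(pt a 0, pt b 1) ∧ |X i - a| ≤ 5*ε ∧ |X j - b| ≤ 5*ε := by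
    intro i j hi hj
    obtain ⟨k, x, hx0, hxl, hxS, hxE, hlen⟩ :=
      hsp.2 (pt (X i) 0) (hmemB i hi) (pt (X j) 1) (hmemT j hj)
    have hval : ∀ t, (x t) 1 = 0 ∨ (x t) 1 = 1 := by
      intro t
      obtain ⟨i', _, h | h⟩ := hdec (x t) (hxS t) <;> rw [h] <;>
        simp [pt_apply1]
    obtain ⟨t, hc0, hc1⟩ := path_cross x (by rw [hx0]; exact pt_apply1 _ _)
      (by rw [hxl]; exact pt_apply1 _ _) hval
    obtain ⟨i', hi', hcs⟩ := hdec (x t.castSucc) (hxS t.castSucc)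
    have hcseq : x t.castSucc = pt (X i') 0 := by
      rcases hcs with h | h
      · exact h
      · rw [h, pt_apply1] at hc0; norm_num at hc0
    obtain ⟨j', hj', hss⟩ := hdec (x t.succ) (hxS t.succ)
    have hsseq : x t.succ = pt (X j') 1 := by
      rcases hss with h | h
      · rw [h, pt_apply1] at hc1; norm_num at hc1
      · exact h
    set a := X i' with ha
    set b := X j' with hb
    refine ⟨s(x t.castSucc, x t.succ), hxE t, a, b, by rw [hcseq, hsseq], ?_⟩
    -- length chain
    have hsplit := path_split x t
    rw [hx0, hxl, hcseq, hsseq] at hsplit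
    have hd1 : dist (pt (X i) 0) (pt a 0) = |X i - a| := by
      rw [dist_pt]; simp [Real.sqrt_sq_eq_abs]
    have hd2 : dist (pt a 0) (pt b 1) = Real.sqrt (1 + (a - b)^2) := by
      rw [dist_pt]; rw [show ((0:ℝ) - 1)^2 = 1 by norm_num, add_comm]
    have hd3 : dist (pt b 1) (pt (X j) 1) = |X j - b| := by
      rw [dist_pt]; simp [Real.sqrt_sq_eq_abs, abs_sub_comm]
    have hdpq : dist (pt (X i) 0) (pt (X j) 1)
        = Real.sqrt (1 + (X i - X j)^2) := by
      rw [dist_pt]; rw [show ((0:ℝ) - 1)^2 = 1 by norm_num, add_comm]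
    rw [hd1, hd2, hd3] at hsplit
    rw [hdpq] at hlen
    have hineq : |X i - a| + |X j - b| + Real.sqrt (1 + (a - b)^2)
        ≤ (1 + ε) * Real.sqrt (1 + (X i - X j)^2) := by
      calc |X i - a| + |X j - b| + Real.sqrt (1 + (a - b)^2)
          = |X i - a| + Real.sqrt (1 + (a - b)^2) + |X j - b| := by ring
        _ ≤ ∑ i : Fin k, dist (x i.castSucc) (x i.succ) := hsplit
        _ ≤ (1 + ε) * Real.sqrt (1 + (X i - X j)^2) := hlen
    -- apply lemA
    have habs : ∀ {c d : ℕ}, c < m → d < m → |X c - X d| ≤ 1 := by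
      intro c d hc hd
      rw [abs_le]
      obtain ⟨h1, h2⟩ := hXrange c hc
      obtain ⟨h3, h4⟩ := hXrange d hd
      constructor <;> linarith
    have key := lemA (u := X i - a) (v := X j - b) (s := a - b) (d := X i - X j)
      hε (by simpa using habs hi hj) (by simpa [ha, hb] using habs hi' hj') ?_ ?_
    · constructor <;> [skip; skip] <;>
      · have h1 := abs_nonneg (X i - a)
        have h2 := abs_nonneg (X j - b)
        linarith
    · have : (X i - X j) - (a - b) = (X i - a) - (X j - b) := by ring
      rw [this]
      exact abs_sub _ _
    · linarith [hineq]
  -- choose the edge for each pair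
  set F : ℕ × ℕ → Sym2 Plane := fun p =>
    if h : p.1 < m ∧ p.2 < m then (hexists p.1 p.2 h.1 h.2).choose
    else s(pt 0 0, pt 0 1) with hF
  have hFspec : ∀ p : ℕ × ℕ, p.1 < m → p.2 < m → F p ∈ E ∧
      ∃ a b : ℝ, F p = s(pt a 0, pt b 1) ∧ |X p.1 - a| ≤ 5*ε ∧ |X p.2 - b| ≤ 5*ε := by
    intro p h1 h2
    have := (hexists p.1 p.2 h1 h2).choose_spec
    rw [hF]; simp only [dif_pos (And.intro h1 h2)]
    exact this
  set P : Finset (ℕ × ℕ) := Finset.range m ×ˢ Finset.range m with hP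
  -- fiber counting
  have hcount : P.card ≤ 121 * (P.image F).card := by
    apply Finset.card_le_mul_card_image
    intro e he
    obtain ⟨p0, hp0P, hp0e⟩ := Finset.mem_image.1 he
    rw [hP, Finset.mem_product, Finset.mem_range, Finset.mem_range] at hp0P
    obtain ⟨hE0, a0, b0, heq0, hu0, hv0⟩ := hFspec p0 hp0P.1 hp0P.2
    rw [hp0e] at heq0
    have hsubset : P.filter (fun p => F p = e) ⊆
        Finset.Icc (p0.1 - 5) (p0.1 + 5) ×ˢ Finset.Icc (p0.2 - 5) (p0.2 + 5) := by
      intro p hp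
      rw [Finset.mem_filter] at hp
      obtain ⟨hpP, hpe⟩ := hp
      rw [hP, Finset.mem_product, Finset.mem_range, Finset.mem_range] at hpP
      obtain ⟨hE1, a1, b1, heq1, hu1, hv1⟩ := hFspec p hpP.1 hpP.2
      rw [hpe] at heq1
      obtain ⟨hab, hbb⟩ := cross_edge_eq (heq1.symm.trans heq0)
      rw [hab] at hu1
      rw [hbb] at hv1
      -- |X p.1 - X p0.1| ≤ 10 ε hence |p.1 - p0.1| ≤ 5
      have hclose : ∀ c d : ℕ, c < m → d < m → |X c - a0| ≤ 5*ε → |X d - a0| ≤ 5*ε →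
          (c : ℝ) ≤ (d : ℝ) + 5 := by
        intro c d hc hd h1 h2
        have hXd : |X c - X d| ≤ 10 * ε := by
          have : X c - X d = (X c - a0) - (X d - a0) := by ring
          rw [this]
          calc |(X c - a0) - (X d - a0)| ≤ |X c - a0| + |X d - a0| := abs_sub _ _
            _ ≤ 10 * ε := by linarith
        have hXcd : |(c:ℝ) - (d:ℝ)| ≤ 10 * ε * ((m:ℝ) - 1) := by
          have : X c - X d = ((c:ℝ) - (d:ℝ)) / ((m:ℝ) - 1) := by
            rw [hX]; ring
          rw [this, abs_div, abs_of_pos hm1pos, div_le_iff₀ hm1pos] at hXd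
          exact hXd
        have hbound : 10 * ε * ((m:ℝ) - 1) ≤ 5 := by
          have : (m:ℝ) - 1 ≤ ε⁻¹ / 2 := by linarith
          calc 10 * ε * ((m:ℝ) - 1) ≤ 10 * ε * (ε⁻¹ / 2) := by
                apply mul_le_mul_of_nonneg_left this (by positivity)
            _ = 5 * (ε * ε⁻¹) := by ring
            _ = 5 := by rw [hεinv]; norm_num
        have := abs_le.1 (hXcd.trans hbound)
        linarith [this.1]
      rw [Finset.mem_product, Finset.mem_Icc, Finset.mem_Icc]
      have h1a := hclose p.1 p0.1 hpP.1 hp0P.1 hu1 hu0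
      have h1b := hclose p0.1 p.1 hp0P.1 hpP.1 hu0 hu1
      have hclose' : ∀ c d : ℕ, c < m → d < m → |X c - b0| ≤ 5*ε → |X d - b0| ≤ 5*ε →
          (c : ℝ) ≤ (d : ℝ) + 5 := by
        intro c d hc hd h1 h2
        have hXd : |X c - X d| ≤ 10 * ε := by
          have : X c - X d = (X c - b0) - (X d - b0) := by ring
          rw [this]
          calc |(X c - b0) - (X d - b0)| ≤ |X c - b0| + |X d - b0| := abs_sub _ _
            _ ≤ 10 * ε := by linarith
        have hXcd : |(c:ℝ) - (d:ℝ)| ≤ 10 * ε * ((m:ℝ) - 1) := by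
          have : X c - X d = ((c:ℝ) - (d:ℝ)) / ((m:ℝ) - 1) := by
            rw [hX]; ring
          rw [this, abs_div, abs_of_pos hm1pos, div_le_iff₀ hm1pos] at hXd
          exact hXd
        have hbound : 10 * ε * ((m:ℝ) - 1) ≤ 5 := by
          have : (m:ℝ) - 1 ≤ ε⁻¹ / 2 := by linarith
          calc 10 * ε * ((m:ℝ) - 1) ≤ 10 * ε * (ε⁻¹ / 2) := by
                apply mul_le_mul_of_nonneg_left this (by positivity)
            _ = 5 * (ε * ε⁻¹) := by ring
            _ = 5 := by rw [hεinv]; norm_num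
        have := abs_le.1 (hXcd.trans hbound)
        linarith [this.1]
      have h2a := hclose' p.2 p0.2 hpP.2 hp0P.2 hv1 hv0
      have h2b := hclose' p0.2 p.2 hp0P.2 hpP.2 hv0 hv1
      have n1a : p.1 ≤ p0.1 + 5 := by exact_mod_cast (by push_cast; linarith : (p.1:ℝ) ≤ ((p0.1 + 5 : ℕ) : ℝ))
      have n1b : p0.1 ≤ p.1 + 5 := by exact_mod_cast (by push_cast; linarith : (p0.1:ℝ) ≤ ((p.1 + 5 : ℕ) : ℝ))
      have n2a : p.2 ≤ p0.2 + 5 := by exact_mod_cast (by push_cast; linarith : (p.2:ℝ) ≤ ((p0.2 + 5 : ℕ) : ℝ))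
      have n2b : p0.2 ≤ p.2 + 5 := by exact_mod_cast (by push_cast; linarith : (p0.2:ℝ) ≤ ((p.2 + 5 : ℕ) : ℝ))
      exact ⟨⟨by omega, n1a⟩, ⟨by omega, n2a⟩⟩
    calc (P.filter (fun p => F p = e)).card
        ≤ (Finset.Icc (p0.1 - 5) (p0.1 + 5) ×ˢ Finset.Icc (p0.2 - 5) (p0.2 + 5)).card :=
          Finset.card_le_card hsubset
      _ = (Finset.Icc (p0.1 - 5) (p0.1 + 5)).card * (Finset.Icc (p0.2 - 5) (p0.2 + 5)).card :=
          Finset.card_product _ _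
      _ ≤ 11 * 11 := by
          apply Nat.mul_le_mul <;> (rw [Nat.card_Icc]; omega)
      _ = 121 := by norm_num
  -- weight bound
  have himE : P.image F ⊆ E := by
    intro e he
    obtain ⟨p, hpP, hpe⟩ := Finset.mem_image.1 he
    rw [hP, Finset.mem_product, Finset.mem_range, Finset.mem_range] at hpP
    rw [← hpe]
    exact (hFspec p hpP.1 hpP.2).1
  have hweight1 : ∀ e ∈ P.image F, (1:ℝ) ≤ edgeWeight e := by
    intro e he
    obtain ⟨p, hpP, hpe⟩ := Finset.mem_image.1 he
    rw [hP, Finset.mem_product, Finset.mem_range, Finset.mem_range] at hpP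
    obtain ⟨_, a, b, heq, _, _⟩ := hFspec p hpP.1 hpP.2
    rw [← hpe, heq, edgeWeight_mk, dist_pt]
    calc (1:ℝ) = Real.sqrt 1 := Real.sqrt_one.symm
      _ ≤ Real.sqrt ((a - b)^2 + (0 - 1)^2) :=
          Real.sqrt_le_sqrt (by nlinarith [sq_nonneg (a - b)])
  have hcardW : ((P.image F).card : ℝ) ≤ W := by
    calc ((P.image F).card : ℝ) = ∑ _e ∈ P.image F, (1:ℝ) := by simp
      _ ≤ ∑ e ∈ P.image F, edgeWeight e := Finset.sum_le_sum hweight1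
      _ ≤ W := Finset.sum_le_sum_of_subset_of_nonneg himE
          (fun e _ _ => edgeWeight_nonneg e)
  -- final arithmetic
  have hPcard : P.card = m * m := by rw [hP, Finset.card_product, Finset.card_range]
  have hmm : (m:ℝ) * (m:ℝ) ≤ 121 * W := by
    have : ((m * m : ℕ) : ℝ) ≤ ((121 * (P.image F).card : ℕ) : ℝ) := by
      exact_mod_cast hPcard ▸ hcount
    push_cast at this
    linarith
  have hm4 : ε⁻¹ ≤ 4 * (m:ℝ) := by linarith
  have h2e : ε ^ (2:ℝ) = ε * ε := by
    rw [show (2:ℝ) = ((2:ℕ):ℝ) by norm_num, Real.rpow_natCast, sq]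
  have hrp : ε ^ (-(2:ℝ)) = ε⁻¹ * ε⁻¹ := by
    rw [Real.rpow_neg hε.le, h2e, mul_inv]
  rw [hrp]
  nlinarith [mul_le_mul hm4 hm4 (inv_nonneg.2 hε.le) (by positivity : (0:ℝ) ≤ 4 * (m:ℝ)), hmm]
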